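/- (Maxwell's Theorem) If X_1, ..., X_d (d ≥ 2) are independent real random variables such that the vector (X_1, ..., X_d) is spherically symmetric (its law is invariant under every orthogonal transformation of ℝ^d) and not identically zero, then X_1, ..., X_d are iid centered normal random variables with a common variance. -/

import Mathlib

open MeasureTheory ProbabilityTheory Matrix

open Real Filter


lemma mw_gauss_cos {b : ℝ} (hb : 0 < b) (u : ℝ) :
    ∫ x : ℝ, Real.exp (-b * x^2) * Real.cos (u * x)
      = Real.sqrt (π / b) * Real.exp (-u^2 / (4*b)) := by
  have h := fourierIntegral_gaussian (b := (b:ℂ)) (by simpa using hb) (u:ℂ)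
  have hint : Integrable (fun x : ℝ => Real.exp (-b * x^2)) := integrable_exp_neg_mul_sq hb
  have hcos : Integrable (fun x : ℝ => Real.exp (-b * x^2) * Real.cos (u * x)) := by
    refine hint.mono' ?_ ?_
    · exact (Continuous.mul (by continuity) (by continuity)).aestronglyMeasurable
    · filter_upwards with x
      rw [norm_mul, Real.norm_eq_abs, Real.norm_eq_abs, abs_of_pos (Real.exp_pos _)]
      nlinarith [abs_cos_le_one (u * x), Real.exp_pos (-b * x^2), abs_nonneg (Real.cos (u*x))]
  have hsin : Integrable (fun x : ℝ => Real.exp (-b * x^2) * Real.sin (u * x)) := by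
    refine hint.mono' ?_ ?_
    · exact (Continuous.mul (by continuity) (by continuity)).aestronglyMeasurable
    · filter_upwards with x
      rw [norm_mul, Real.norm_eq_abs, Real.norm_eq_abs, abs_of_pos (Real.exp_pos _)]
      nlinarith [abs_sin_le_one (u * x), Real.exp_pos (-b * x^2), abs_nonneg (Real.sin (u*x))]
  have hLHS : (∫ x : ℝ, Complex.exp (Complex.I * u * x) * Complex.exp (-b * x^2))
      = ((∫ x : ℝ, Real.exp (-b * x^2) * Real.cos (u * x) : ℝ) : ℂ)
        + ((∫ x : ℝ, Real.exp (-b * x^2) * Real.sin (u * x) : ℝ) : ℂ) * Complex.I := by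
    calc ∫ x : ℝ, Complex.exp (Complex.I * u * x) * Complex.exp (-b * x^2)
        = ∫ x : ℝ, (((Real.exp (-b * x^2) * Real.cos (u * x) : ℝ) : ℂ)
            + ((Real.exp (-b * x^2) * Real.sin (u * x) : ℝ) : ℂ) * Complex.I) := by
          congr 1; funext x
          have harg : Complex.I * u * x = ((u * x : ℝ) : ℂ) * Complex.I := by push_cast; ring
          rw [harg, Complex.exp_mul_I]
          have h3 : Complex.exp (-(b:ℂ) * (x:ℂ)^2) = ((Real.exp (-b * x^2) : ℝ) : ℂ) := by
            rw [Complex.ofReal_exp]; push_cast; ring_nf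
          rw [h3, ← Complex.ofReal_cos, ← Complex.ofReal_sin]
          push_cast; ring
      _ = (∫ x : ℝ, ((Real.exp (-b * x^2) * Real.cos (u * x) : ℝ) : ℂ))
            + (∫ x : ℝ, ((Real.exp (-b * x^2) * Real.sin (u * x) : ℝ) : ℂ) * Complex.I) :=
          integral_add (hcos.ofReal (𝕜 := ℂ)) ((hsin.ofReal (𝕜 := ℂ)).mul_const _)
      _ = (∫ x : ℝ, ((Real.exp (-b * x^2) * Real.cos (u * x) : ℝ) : ℂ))
            + (∫ x : ℝ, ((Real.exp (-b * x^2) * Real.sin (u * x) : ℝ) : ℂ)) * Complex.I := by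
          rw [integral_mul_const]
      _ = _ := by
          have i1 : (∫ x : ℝ, ((Real.exp (-b * x^2) * Real.cos (u * x) : ℝ) : ℂ))
              = ((∫ x : ℝ, Real.exp (-b * x^2) * Real.cos (u * x) : ℝ) : ℂ) := integral_ofReal
          have i2 : (∫ x : ℝ, ((Real.exp (-b * x^2) * Real.sin (u * x) : ℝ) : ℂ))
              = ((∫ x : ℝ, Real.exp (-b * x^2) * Real.sin (u * x) : ℝ) : ℂ) := integral_ofReal
          rw [i1, i2]
  have hRHS : ((π / (b:ℂ)) ^ (1/2 : ℂ) * Complex.exp (-(u:ℂ)^2 / (4*b)))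
      = ((Real.sqrt (π / b) * Real.exp (-u^2 / (4*b)) : ℝ) : ℂ) := by
    have hpb : (0:ℝ) ≤ π / b := by positivity
    have e1 : ((π:ℂ) / (b:ℂ)) = ((π / b : ℝ) : ℂ) := by push_cast; ring
    have e2 : ((π / b : ℝ) : ℂ) ^ (1/2 : ℂ) = ((Real.sqrt (π / b) : ℝ) : ℂ) := by
      rw [Real.sqrt_eq_rpow, Complex.ofReal_cpow hpb]; norm_num
    have e3 : Complex.exp (-(u:ℂ)^2 / (4*(b:ℂ))) = ((Real.exp (-u^2 / (4*b)) : ℝ) : ℂ) := by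
      rw [Complex.ofReal_exp]; push_cast; ring_nf
    rw [e1, e2, e3]; push_cast; ring
  rw [hLHS, hRHS] at h
  have h2 := congrArg Complex.re h
  simp only [Complex.add_re, Complex.mul_re, Complex.ofReal_re, Complex.ofReal_im,
    Complex.I_re, Complex.I_im] at h2
  linarith

lemma mw_pdf_cont (v : NNReal) : Continuous (gaussianPDFReal 0 v) := by
  unfold gaussianPDFReal
  fun_prop

lemma mw_pdf_fourier (v : NNReal) (hv : 0 < (v:ℝ)) (u : ℝ) :
    gaussianPDFReal 0 v u = (2*π)⁻¹ * ∫ t : ℝ, Real.exp (-((v:ℝ)/2) * t^2) * Real.cos (u * t) := by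
  rw [mw_gauss_cos (by positivity : (0:ℝ) < (v:ℝ)/2) u]
  unfold gaussianPDFReal
  have h1 : π / ((v:ℝ)/2) = (2*π) / (v:ℝ) := by field_simp
  have h2 : Real.sqrt ((2*π) / (v:ℝ)) = Real.sqrt (2*π) / Real.sqrt (v:ℝ) :=
    Real.sqrt_div (by positivity) _
  have h3 : Real.sqrt (2*π*(v:ℝ)) = Real.sqrt (2*π) * Real.sqrt (v:ℝ) :=
    Real.sqrt_mul (by positivity) _
  have h4 : -(u - 0)^2 / (2*(v:ℝ)) = -u^2 / (4*((v:ℝ)/2)) := by ring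
  rw [h1, h2, h3, h4]
  have hs : (0:ℝ) < Real.sqrt (2*π) := Real.sqrt_pos.2 (by positivity)
  have hsv : (0:ℝ) < Real.sqrt (v:ℝ) := Real.sqrt_pos.2 hv
  have hsq : Real.sqrt (2*π) * Real.sqrt (2*π) = 2*π := Real.mul_self_sqrt (by positivity)
  rw [← hsq]
  field_simp
  ring_nf
  rw [Real.sqrt_sq (Real.sqrt_nonneg _)]

lemma mw_gaussian_integral (v : NNReal) (hv : v ≠ 0) (f : ℝ → ℝ) :
    ∫ x, f x ∂(gaussianReal 0 v) = ∫ x, gaussianPDFReal 0 v x * f x := by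
  rw [gaussianReal_of_var_ne_zero 0 hv]
  have hmeas : Measurable (fun x => (gaussianPDFReal 0 v x).toNNReal) :=
    (measurable_gaussianPDFReal 0 v).real_toNNReal
  have hh : (gaussianPDF 0 v) = fun x => (((gaussianPDFReal 0 v x).toNNReal : NNReal) : ENNReal) :=
    rfl
  rw [hh, integral_withDensity_eq_integral_smul hmeas f]
  congr 1; funext x
  simp [NNReal.smul_def, Real.coe_toNNReal _ (gaussianPDFReal_nonneg 0 v x)]

lemma mw_gauss_char (v : NNReal) (t : ℝ) :
    ∫ x, Real.cos (t * x) ∂(gaussianReal 0 v) = Real.exp (-(v:ℝ) * t^2 / 2) := by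
  rcases eq_or_ne v 0 with h | h
  · subst h; rw [gaussianReal_zero_var]; simp
  · have hv : (0:ℝ) < (v:ℝ) := by positivity
    rw [mw_gaussian_integral v h]
    have hb : (0:ℝ) < (2*(v:ℝ))⁻¹ := by positivity
    calc ∫ x, gaussianPDFReal 0 v x * Real.cos (t*x)
        = (Real.sqrt (2*π*(v:ℝ)))⁻¹ * ∫ x, Real.exp (-(2*(v:ℝ))⁻¹ * x^2) * Real.cos (t*x) := by
          rw [← integral_const_mul]; congr 1; funext x
          unfold gaussianPDFReal
          rw [show -(x - 0)^2/(2*(v:ℝ)) = -(2*(v:ℝ))⁻¹ * x^2 by ring]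
          ring
      _ = (Real.sqrt (2*π*(v:ℝ)))⁻¹ * (Real.sqrt (π / (2*(v:ℝ))⁻¹)
            * Real.exp (-t^2 / (4*(2*(v:ℝ))⁻¹))) := by rw [mw_gauss_cos hb t]
      _ = Real.exp (-(v:ℝ) * t^2 / 2) := by
          have e1 : π / (2*(v:ℝ))⁻¹ = 2*π*(v:ℝ) := by field_simp
          have e2 : -t^2 / (4*(2*(v:ℝ))⁻¹) = -(v:ℝ) * t^2 / 2 := by field_simp; ring
          rw [e1, e2, ← mul_assoc, inv_mul_cancel₀ (by positivity), one_mul]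

lemma mw_gauss_symm (v : NNReal) :
    Measure.map (fun x : ℝ => -x) (gaussianReal 0 v) = gaussianReal 0 v := by
  have h := gaussianReal_map_const_mul (μ := 0) (v := v) (-1)
  have e : (fun x : ℝ => -x) = (fun x : ℝ => (-1 : ℝ) * x) := by funext x; ring
  rw [e, h]
  congr 1
  · ring
  · apply NNReal.coe_injective
    simp

lemma mw_cauchy (φ : ℝ → ℝ) (hcont : Continuous φ) (h0 : φ 0 = 1)
    (hb : ∀ t, |φ t| ≤ 1)
    (hmul : ∀ a b, φ a * φ b = φ (Real.sqrt (a^2+b^2))) :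
    ∃ c : ℝ, 0 ≤ c ∧ ∀ t, φ t = Real.exp (-c * t^2) := by
  have heven : ∀ t, φ |t| = φ t := by
    intro t
    have h := hmul 0 t
    rw [h0, one_mul] at h
    rw [show (0:ℝ)^2 + t^2 = t^2 by ring, Real.sqrt_sq_eq_abs] at h
    exact h.symm
  have hs2 : (1:ℝ) < Real.sqrt 2 := by
    rw [show (1:ℝ) = Real.sqrt 1 by simp]
    exact Real.sqrt_lt_sqrt (by norm_num) (by norm_num)
  have hs2' : Real.sqrt 2 ≠ 0 := by positivity
  have hrep : ∀ t, φ t = φ (t / Real.sqrt 2) ^ 2 := by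
    intro t
    have h := hmul (t / Real.sqrt 2) (t / Real.sqrt 2)
    have h2 : (Real.sqrt 2)^2 = 2 := Real.sq_sqrt (by norm_num)
    have harg : Real.sqrt ((t / Real.sqrt 2)^2 + (t / Real.sqrt 2)^2) = |t| := by
      have e : (t / Real.sqrt 2)^2 + (t / Real.sqrt 2)^2 = t^2 := by
        rw [div_pow, h2]; ring
      rw [e, Real.sqrt_sq_eq_abs]
    rw [harg, heven] at h
    rw [← h, sq]
  have hnonneg : ∀ t, 0 ≤ φ t := fun t => (hrep t) ▸ sq_nonneg _
  have hpos : ∀ t, 0 < φ t := by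
    intro t
    rcases lt_or_eq_of_le (hnonneg t) with h | h
    · exact h
    have hz : ∀ n : ℕ, φ (t / (Real.sqrt 2)^n) = 0 := by
      intro n
      induction n with
      | zero => simpa using h.symm
      | succ n ih =>
        have h2 := hrep (t / (Real.sqrt 2)^n)
        rw [ih] at h2
        rw [pow_succ, ← div_div]
        exact (pow_eq_zero_iff (two_ne_zero)).mp h2.symm
    have hlim : Tendsto (fun n : ℕ => t / (Real.sqrt 2)^n) atTop (nhds 0) := by
      have : Tendsto (fun n : ℕ => ((Real.sqrt 2)⁻¹)^n) atTop (nhds 0) :=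
        tendsto_pow_atTop_nhds_zero_of_lt_one (by positivity) (by
          rw [inv_lt_one_iff₀]; right; exact hs2)
      have := this.const_mul t
      rw [mul_zero] at this
      convert this using 2 with n
      rw [div_eq_mul_inv, inv_pow]
    have h1 : Tendsto (fun n : ℕ => φ (t / (Real.sqrt 2)^n)) atTop (nhds 1) := by
      have := (hcont.tendsto 0).comp hlim
      rwa [h0] at this
    have h2 : Tendsto (fun n : ℕ => φ (t / (Real.sqrt 2)^n)) atTop (nhds 0) := by
      simp only [hz]; exact tendsto_const_nhds
    exact absurd (tendsto_nhds_unique h1 h2) one_ne_zero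
  set f : ℝ → ℝ := fun u => Real.log (φ (Real.sqrt u)) with hf
  have hf0 : ∀ u : ℝ, u ≤ 0 → f u = 0 := by
    intro u hu
    simp only [hf]
    rw [Real.sqrt_eq_zero_of_nonpos hu, h0, Real.log_one]
  have hfadd : ∀ u v : ℝ, 0 ≤ u → 0 ≤ v → f (u+v) = f u + f v := by
    intro u v hu hv
    have h := hmul (Real.sqrt u) (Real.sqrt v)
    rw [Real.sq_sqrt hu, Real.sq_sqrt hv] at h
    simp only [hf]
    rw [← h, Real.log_mul (hpos _).ne' (hpos _).ne']
  set F : ℝ → ℝ := fun u => f u - f (-u) with hF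
  have hFf : ∀ u : ℝ, 0 ≤ u → F u = f u := by
    intro u hu
    simp only [hF]
    rw [hf0 (-u) (by linarith)]
    ring
  have hFadd : ∀ a b : ℝ, F (a+b) = F a + F b := by
    intro a b
    rcases le_total 0 a with ha | ha <;> rcases le_total 0 b with hb' | hb' <;>
      rcases le_total 0 (a+b) with hab | hab
    · rw [hFf _ hab, hFf _ ha, hFf _ hb', hfadd a b ha hb']
    · have ha0 : a = 0 := by linarith
      have hb0 : b = 0 := by linarith
      have hF0 : F 0 = 0 := by
        simp only [hF, neg_zero]
        rw [hf0 0 le_rfl]; ring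
      simp [ha0, hb0, hF0]
    · -- a ≥ 0, b ≤ 0, a+b ≥ 0
      have h1 := hfadd (a+b) (-b) hab (by linarith)
      rw [show a+b+ -b = a by ring] at h1
      simp only [hF]
      rw [hf0 (-(a+b)) (by linarith), hf0 (-a) (by linarith), hf0 b hb']
      linarith
    · -- a ≥ 0, b ≤ 0, a+b ≤ 0
      have h1 := hfadd a (-(a+b)) ha (by linarith)
      rw [show a + -(a+b) = -b by ring] at h1
      simp only [hF]
      rw [hf0 (a+b) hab, hf0 (-a) (by linarith), hf0 b hb']
      linarith
    · -- a ≤ 0, b ≥ 0, a+b ≥ 0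
      have h1 := hfadd (a+b) (-a) hab (by linarith)
      rw [show a+b+ -a = b by ring] at h1
      simp only [hF]
      rw [hf0 (-(a+b)) (by linarith), hf0 a ha, hf0 (-b) (by linarith)]
      linarith
    · -- a ≤ 0, b ≥ 0, a+b ≤ 0
      have h1 := hfadd b (-(a+b)) hb' (by linarith)
      rw [show b + -(a+b) = -a by ring] at h1
      simp only [hF]
      rw [hf0 (a+b) hab, hf0 a ha, hf0 (-b) (by linarith)]
      linarith
    · have ha0 : a = 0 := by linarith
      have hb0 : b = 0 := by linarith
      have hF0 : F 0 = 0 := by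
        simp only [hF, neg_zero]
        rw [hf0 0 le_rfl]; ring
      simp [ha0, hb0, hF0]
    · -- a ≤ 0, b ≤ 0, a+b ≤ 0
      have h1 := hfadd (-a) (-b) (by linarith) (by linarith)
      rw [show -a + -b = -(a+b) by ring] at h1
      simp only [hF]
      rw [hf0 (a+b) hab, hf0 a ha, hf0 b hb']
      linarith
  have hfc : Continuous f := by
    rw [continuous_iff_continuousAt]
    intro u
    have csq : Continuous (fun u : ℝ => φ (Real.sqrt u)) := hcont.comp Real.continuous_sqrt
    have c3 : ContinuousAt Real.log (φ (Real.sqrt u)) := Real.continuousAt_log (hpos _).ne'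
    show ContinuousAt (Real.log ∘ (fun u : ℝ => φ (Real.sqrt u))) u
    exact ContinuousAt.comp (f := fun u : ℝ => φ (Real.sqrt u)) (g := Real.log) c3 csq.continuousAt
  have hFc : Continuous F := hfc.sub (hfc.comp continuous_neg)
  have hlin : ∀ u : ℝ, F u = u * F 1 := by
    intro u
    have hL := AddMonoidHom.coe_toRealLinearMap (AddMonoidHom.mk' F hFadd) hFc
    have := ((AddMonoidHom.mk' F hFadd).toRealLinearMap hFc).map_smul u 1
    rw [hL] at this
    simpa [smul_eq_mul] using this
  refine ⟨-(f 1), ?_, ?_⟩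
  · have h1 : f 1 ≤ 0 := by
      simp only [hf, Real.sqrt_one]
      exact Real.log_nonpos (hnonneg 1) (abs_le.1 (hb 1)).2
    linarith
  · intro t
    have e1 : φ t = Real.exp (f (t^2)) := by
      simp only [hf]
      rw [Real.exp_log (hpos _), Real.sqrt_sq_eq_abs, heven]
    rw [e1, ← hFf _ (sq_nonneg t), hlin, hFf 1 zero_le_one]
    congr 1
    ring

def mwRot {d : ℕ} (a b : Fin d) (s t : ℝ) : Matrix (Fin d) (Fin d) ℝ :=
  Matrix.of fun i j =>
    if i = a then (if j = a then s else if j = b then t else 0)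
    else if i = b then (if j = a then -t else if j = b then s else 0)
    else if i = j then 1 else 0

lemma mw_sum_pair {d : ℕ} (a b : Fin d) (hab : a ≠ b) (f : Fin d → ℝ)
    (hf : ∀ k, k ≠ a → k ≠ b → f k = 0) : ∑ k, f k = f a + f b := by
  rw [← Finset.sum_pair hab]
  refine (Finset.sum_subset (Finset.subset_univ _) ?_).symm
  intro k _ hk
  simp only [Finset.mem_insert, Finset.mem_singleton, not_or] at hk
  exact hf k hk.1 hk.2

lemma mwRot_mulVec {d : ℕ} (a b : Fin d) (hab : a ≠ b) (s t : ℝ) (x : Fin d → ℝ) :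
    (mwRot a b s t).mulVec x a = s * x a + t * x b := by
  show ∑ j, mwRot a b s t a j * x j = _
  rw [mw_sum_pair a b hab _ (fun k hka hkb => by simp [mwRot, hka, hkb])]
  simp [mwRot, hab, Ne.symm hab]

lemma mwRot_orth {d : ℕ} (a b : Fin d) (hab : a ≠ b) (s t : ℝ) (hst : s^2+t^2 = 1) :
    (mwRot a b s t)ᵀ * mwRot a b s t = 1 := by
  have hba : b ≠ a := Ne.symm hab
  set M := mwRot a b s t with hM
  have Maa : M a a = s := by simp [hM, mwRot]
  have Mab : M a b = t := by simp [hM, mwRot, hba]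
  have Mba : M b a = -t := by simp [hM, mwRot, hba]
  have Mbb : M b b = s := by simp [hM, mwRot, hba]
  have rowa : ∀ j, j ≠ a → j ≠ b → M a j = 0 := by
    intro j hja hjb; simp [hM, mwRot, hja, hjb]
  have rowb : ∀ j, j ≠ a → j ≠ b → M b j = 0 := by
    intro j hja hjb; simp [hM, mwRot, hja, hjb, hba]
  have rowk : ∀ k j, k ≠ a → k ≠ b → M k j = if k = j then 1 else 0 := by
    intro k j hka hkb; simp [hM, mwRot, hka, hkb]
  have hsplit : ∀ i j : Fin d, ∑ k, M k i * M k j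
      = M a i * M a j + M b i * M b j + (if i = j ∧ i ≠ a ∧ i ≠ b then 1 else 0) := by
    intro i j
    have e1 : (Finset.univ : Finset (Fin d)) = {a, b} ∪ (Finset.univ \ {a, b}) := by
      rw [Finset.union_sdiff_of_subset (Finset.subset_univ _)]
    rw [e1, Finset.sum_union (Finset.disjoint_sdiff), Finset.sum_pair hab]
    congr 1
    have e2 : ∀ k ∈ Finset.univ \ ({a, b} : Finset (Fin d)),
        M k i * M k j = if k = i then (if i = j then (1:ℝ) else 0) else 0 := by
      intro k hk
      simp only [Finset.mem_sdiff, Finset.mem_insert, Finset.mem_singleton, not_or] at hk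
      rw [rowk k i hk.2.1 hk.2.2, rowk k j hk.2.1 hk.2.2]
      by_cases hki : k = i
      · subst hki
        by_cases hij : k = j <;> simp [hij]
      · simp [hki]
    rw [Finset.sum_congr rfl e2, Finset.sum_ite_eq' (Finset.univ \ {a, b}) i
      (fun _ => if i = j then (1:ℝ) else 0)]
    by_cases hia : i = a
    · simp [hia, hab]
    · by_cases hib : i = b
      · simp [hib, hba, hab]
      · simp [hia, hib]
  ext i j
  rw [Matrix.mul_apply]
  simp only [Matrix.transpose_apply]
  rw [hsplit]
  rcases eq_or_ne i a with rfl | hia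
  · rcases eq_or_ne j i with rfl | hja
    · rw [Maa, Mba, Matrix.one_apply_eq, if_neg (by simp)]
      nlinarith
    · rcases eq_or_ne j b with rfl | hjb
      · rw [Maa, Mab, Mba, Mbb, Matrix.one_apply_ne (Ne.symm hja), if_neg (by simp)]
        ring
      · rw [Maa, Mba, rowa j hja hjb, rowb j hja hjb,
          Matrix.one_apply_ne (fun h => hja h.symm), if_neg (by simp)]
        ring
  · rcases eq_or_ne i b with rfl | hib
    · rcases eq_or_ne j a with rfl | hja
      · rw [Maa, Mab, Mba, Mbb, Matrix.one_apply_ne hba, if_neg (by simp [hba])]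
        ring
      · rcases eq_or_ne j i with rfl | hjb'
        · rw [Mab, Mbb, Matrix.one_apply_eq, if_neg (by simp [hba])]
          nlinarith
        · rw [Mab, Mbb, rowa j hja hjb', rowb j hja hjb',
            Matrix.one_apply_ne (fun h => hjb' h.symm), if_neg (by simp [hba])]
          ring
    · rw [rowa i hia hib, rowb i hia hib]
      rcases eq_or_ne i j with rfl | hij
      · rw [Matrix.one_apply_eq, if_pos ⟨rfl, hia, hib⟩]
        ring
      · rw [Matrix.one_apply_ne hij, if_neg (by simp [hij])]
        ring

lemma mw_int_bdd {α : Type*} [MeasurableSpace α]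
    (m : Measure α) [IsFiniteMeasure m] {h : α → ℝ}
    (hc : AEStronglyMeasurable h m) {C : ℝ}
    (hb : ∀ x, |h x| ≤ C) : Integrable h m := by
  refine (integrable_const C).mono' hc ?_
  filter_upwards with x
  simpa [Real.norm_eq_abs] using hb x

lemma mw_smooth (μ : Measure ℝ) [IsProbabilityMeasure μ]
    (hsin : ∀ t : ℝ, ∫ x, Real.sin (t * x) ∂μ = 0)
    (g : BoundedContinuousFunction ℝ ℝ) (v : NNReal) (hv : 0 < (v:ℝ)) :
    ∫ x, (∫ z, g (x + Real.sqrt v * z) ∂(gaussianReal 0 1)) ∂μ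
      = ∫ y, g y * ((2*π)⁻¹ * ∫ t : ℝ, Real.exp (-((v:ℝ)/2) * t^2)
          * (Real.cos (t*y) * ∫ x, Real.cos (t*x) ∂μ)) := by
  have hv0 : v ≠ 0 := fun h => by simp [h] at hv
  have pdfc : Continuous (gaussianPDFReal 0 v) := mw_pdf_cont v
  have pdfint : Integrable (gaussianPDFReal 0 v) := integrable_gaussianPDFReal 0 v
  have pdfnn : ∀ u, 0 ≤ gaussianPDFReal 0 v u := gaussianPDFReal_nonneg 0 v
  have hmap : Measure.map (fun z : ℝ => Real.sqrt v * z) (gaussianReal 0 1) = gaussianReal 0 v := by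
    rw [gaussianReal_map_const_mul]
    norm_num
  have hpoint : ∀ x : ℝ, (∫ z, g (x + Real.sqrt v * z) ∂(gaussianReal 0 1))
      = ∫ y, g y * gaussianPDFReal 0 v (y - x) := by
    intro x
    have e1 : (∫ z, g (x + Real.sqrt v * z) ∂(gaussianReal 0 1))
        = ∫ u, g (x + u) ∂(gaussianReal 0 v) := by
      rw [← hmap]
      exact (integral_map (φ := fun z : ℝ => Real.sqrt v * z) (μ := gaussianReal 0 1)
        ((measurable_const_mul _).aemeasurable) (f := fun u => g (x + u))
        ((by continuity : Continuous fun u : ℝ => g (x + u)).aestronglyMeasurable)).symm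
    have e2 : (∫ u, g (x + u) ∂(gaussianReal 0 v))
        = ∫ u, gaussianPDFReal 0 v u * g (x + u) := mw_gaussian_integral v hv0 _
    have e3 : (∫ u, gaussianPDFReal 0 v u * g (x + u))
        = ∫ y, g y * gaussianPDFReal 0 v (y - x) := by
      have h4 := integral_add_left_eq_self (μ := (volume : Measure ℝ))
        (fun y => g y * gaussianPDFReal 0 v (y - x)) x
      rw [← h4]
      congr 1
      funext u
      rw [show x + u - x = u by ring]
      ring
    rw [e1, e2, e3]
  rw [integral_congr_ae (Filter.Eventually.of_forall hpoint)]
  -- Fubini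
  have hcontf : Continuous (fun p : ℝ × ℝ => g p.2 * gaussianPDFReal 0 v (p.2 - p.1)) :=
    (g.continuous.comp continuous_snd).mul (pdfc.comp (continuous_snd.sub continuous_fst))
  have hib : ∀ x : ℝ, Integrable (fun y => g y * gaussianPDFReal 0 v (y - x)) volume :=
    fun x => Integrable.bdd_mul (pdfint.comp_sub_right x)
      g.continuous.aestronglyMeasurable (Filter.Eventually.of_forall fun y => g.norm_coe_le_norm y)
  have hintf : Integrable (fun p : ℝ × ℝ => g p.2 * gaussianPDFReal 0 v (p.2 - p.1))
      (μ.prod volume) := by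
    rw [integrable_prod_iff hcontf.aestronglyMeasurable]
    constructor
    · filter_upwards with x
      exact hib x
    · refine mw_int_bdd μ ((hcontf.aestronglyMeasurable.norm).integral_prod_right') (C := ‖g‖) ?_
      intro x
      have hnn : 0 ≤ ∫ y, ‖g y * gaussianPDFReal 0 v (y - x)‖ :=
        integral_nonneg (fun y => norm_nonneg _)
      have hle : (∫ y, ‖g y * gaussianPDFReal 0 v (y - x)‖)
          ≤ ∫ y, ‖g‖ * gaussianPDFReal 0 v (y - x) := by
        refine integral_mono (hib x).norm ((pdfint.comp_sub_right x).const_mul _) ?_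
        intro y
        show ‖g y * gaussianPDFReal 0 v (y - x)‖ ≤ ‖g‖ * gaussianPDFReal 0 v (y - x)
        rw [norm_mul, Real.norm_eq_abs (gaussianPDFReal 0 v (y - x)),
          abs_of_nonneg (pdfnn _)]
        exact mul_le_mul_of_nonneg_right (g.norm_coe_le_norm y) (pdfnn _)
      have hval : (∫ y, ‖g‖ * gaussianPDFReal 0 v (y - x)) = ‖g‖ := by
        rw [integral_const_mul, integral_sub_right_eq_self (gaussianPDFReal 0 v) x,
          integral_gaussianPDFReal_eq_one 0 hv0, mul_one]
      rw [abs_of_nonneg hnn]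
      rw [hval] at hle
      exact hle
  rw [integral_integral_swap (f := fun x y => g y * gaussianPDFReal 0 v (y - x)) hintf]
  refine integral_congr_ae (Filter.Eventually.of_forall fun y => ?_)
  dsimp only
  rw [integral_const_mul]
  congr 1
  -- inner Fourier identity
  have hintexp : Integrable (fun t : ℝ => Real.exp (-((v:ℝ)/2) * t^2)) :=
    integrable_exp_neg_mul_sq (by positivity)
  have hrw : ∀ x : ℝ, gaussianPDFReal 0 v (y - x)
      = (2*π)⁻¹ * ∫ t : ℝ, Real.exp (-((v:ℝ)/2) * t^2) * Real.cos ((y - x) * t) :=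
    fun x => mw_pdf_fourier v hv (y - x)
  rw [integral_congr_ae (Filter.Eventually.of_forall hrw), integral_const_mul]
  congr 1
  have hcF : Continuous (fun p : ℝ × ℝ => Real.exp (-((v:ℝ)/2) * p.2^2)
      * Real.cos ((y - p.1) * p.2)) := by
    apply Continuous.mul
    · apply Real.continuous_exp.comp
      continuity
    · apply Real.continuous_cos.comp
      continuity
  have hibt : ∀ x : ℝ, Integrable (fun t : ℝ => Real.exp (-((v:ℝ)/2) * t^2)
      * Real.cos ((y - x) * t)) volume := by
    intro x
    have h1 : Integrable (fun t : ℝ => Real.cos ((y - x) * t)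
        * Real.exp (-((v:ℝ)/2) * t^2)) volume :=
      Integrable.bdd_mul hintexp (Real.continuous_cos.comp
        (continuous_const.mul continuous_id)).aestronglyMeasurable
        (c := 1) (Filter.Eventually.of_forall fun t => by simpa [Real.norm_eq_abs] using Real.abs_cos_le_one _)
    exact h1.congr (Filter.Eventually.of_forall fun t => mul_comm _ _)
  have hiF : Integrable (fun p : ℝ × ℝ => Real.exp (-((v:ℝ)/2) * p.2^2)
      * Real.cos ((y - p.1) * p.2)) (μ.prod volume) := by
    rw [integrable_prod_iff hcF.aestronglyMeasurable]
    constructor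
    · filter_upwards with x
      exact hibt x
    · refine mw_int_bdd μ ((hcF.aestronglyMeasurable.norm).integral_prod_right')
        (C := ∫ t : ℝ, Real.exp (-((v:ℝ)/2) * t^2)) ?_
      intro x
      have hnn : 0 ≤ ∫ t : ℝ, ‖Real.exp (-((v:ℝ)/2) * t^2) * Real.cos ((y - x) * t)‖ :=
        integral_nonneg (fun t => norm_nonneg _)
      have hle : (∫ t : ℝ, ‖Real.exp (-((v:ℝ)/2) * t^2) * Real.cos ((y - x) * t)‖)
          ≤ ∫ t : ℝ, Real.exp (-((v:ℝ)/2) * t^2) := by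
        refine integral_mono (hibt x).norm hintexp ?_
        intro t
        show ‖Real.exp (-((v:ℝ)/2) * t^2) * Real.cos ((y - x) * t)‖
          ≤ Real.exp (-((v:ℝ)/2) * t^2)
        rw [norm_mul, Real.norm_eq_abs, Real.norm_eq_abs, abs_of_pos (Real.exp_pos _)]
        nlinarith [Real.abs_cos_le_one ((y - x) * t), Real.exp_pos (-((v:ℝ)/2) * t^2),
          abs_nonneg (Real.cos ((y - x) * t))]
      rw [abs_of_nonneg hnn]
      exact hle
  rw [integral_integral_swap (f := fun x t => Real.exp (-((v:ℝ)/2) * t^2)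
    * Real.cos ((y - x) * t)) hiF]
  refine integral_congr_ae (Filter.Eventually.of_forall fun t => ?_)
  dsimp only
  rw [integral_const_mul]
  congr 1
  have hc : ∀ x : ℝ, Real.cos ((y - x) * t)
      = Real.cos (t*y) * Real.cos (t*x) + Real.sin (t*y) * Real.sin (t*x) := by
    intro x
    rw [show (y - x) * t = t*y - t*x by ring, Real.cos_sub]
  rw [integral_congr_ae (Filter.Eventually.of_forall hc)]
  have i1 : Integrable (fun x => Real.cos (t*y) * Real.cos (t*x)) μ := by
    refine mw_int_bdd μ ?_ (C := |Real.cos (t*y)|) ?_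
    · exact (continuous_const.mul (Real.continuous_cos.comp
        (continuous_const.mul continuous_id))).aestronglyMeasurable
    · intro x
      rw [abs_mul]
      exact mul_le_of_le_one_right (abs_nonneg _) (Real.abs_cos_le_one _)
  have i2 : Integrable (fun x => Real.sin (t*y) * Real.sin (t*x)) μ := by
    refine mw_int_bdd μ ?_ (C := |Real.sin (t*y)|) ?_
    · exact (continuous_const.mul (Real.continuous_sin.comp
        (continuous_const.mul continuous_id))).aestronglyMeasurable
    · intro x
      rw [abs_mul]
      exact mul_le_of_le_one_right (abs_nonneg _) (Real.abs_sin_le_one _)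
  rw [integral_add i1 i2, integral_const_mul, integral_const_mul, hsin, mul_zero, add_zero]

lemma mw_ext (μ ν : Measure ℝ) [IsProbabilityMeasure μ] [IsProbabilityMeasure ν]
    (hμsin : ∀ t : ℝ, ∫ x, Real.sin (t * x) ∂μ = 0)
    (hνsin : ∀ t : ℝ, ∫ x, Real.sin (t * x) ∂ν = 0)
    (hcos : ∀ t : ℝ, (∫ x, Real.cos (t * x) ∂μ) = ∫ x, Real.cos (t * x) ∂ν) :
    μ = ν := by
  refine ext_of_forall_lintegral_eq_of_IsFiniteMeasure ?_
  intro f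
  set g : BoundedContinuousFunction ℝ ℝ :=
    BoundedContinuousFunction.comp _ (isometry_subtype_coe).lipschitz f with hgdef
  have h1 : ∫⁻ x, (f x : ENNReal) ∂μ = ENNReal.ofReal (∫ x, g x ∂μ) :=
    lintegral_coe_eq_integral _ (g.integrable μ)
  have h2 : ∫⁻ x, (f x : ENNReal) ∂ν = ENNReal.ofReal (∫ x, g x ∂ν) :=
    lintegral_coe_eq_integral _ (g.integrable ν)
  rw [h1, h2]
  congr 1
  -- main claim
  set w : ℕ → NNReal := fun n => ((n : NNReal)+1)⁻¹ with hw
  have hwpos : ∀ n : ℕ, 0 < ((w n : NNReal) : ℝ) := by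
    intro n
    have : ((w n : NNReal) : ℝ) = (((n:ℝ)+1))⁻¹ := by
      rw [hw]; push_cast; norm_num
    rw [this]; positivity
  have key : ∀ n : ℕ, (∫ x, (∫ z, g (x + Real.sqrt (w n) * z) ∂(gaussianReal 0 1)) ∂μ)
      = ∫ x, (∫ z, g (x + Real.sqrt (w n) * z) ∂(gaussianReal 0 1)) ∂ν := by
    intro n
    rw [mw_smooth μ hμsin g (w n) (hwpos n), mw_smooth ν hνsin g (w n) (hwpos n)]
    simp only [hcos]
  have hc0 : Filter.Tendsto (fun n : ℕ => Real.sqrt (w n)) Filter.atTop (nhds 0) := by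
    have h0 : Filter.Tendsto (fun n : ℕ => ((w n : NNReal) : ℝ)) Filter.atTop (nhds 0) := by
      have h := tendsto_one_div_add_atTop_nhds_zero_nat (𝕜 := ℝ)
      refine h.congr fun n => ?_
      rw [hw]; push_cast; rw [one_div]
    have h2 := (Real.continuous_sqrt.tendsto 0).comp h0
    simpa [Function.comp_def] using h2
  have hlim : ∀ (m : Measure ℝ), IsProbabilityMeasure m →
      Filter.Tendsto (fun n : ℕ => ∫ x, (∫ z, g (x + Real.sqrt (w n) * z)
        ∂(gaussianReal 0 1)) ∂m) Filter.atTop (nhds (∫ x, g x ∂m)) := by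
    intro m hm
    refine tendsto_integral_of_dominated_convergence (fun _ => ‖g‖) ?_ ?_ ?_ ?_
    · intro n
      refine (continuous_of_dominated
        (F := fun (x : ℝ) (z : ℝ) => g (x + Real.sqrt (w n) * z)) (bound := fun _ => ‖g‖)
        ?_ ?_ ?_ ?_).aestronglyMeasurable
      · intro x
        exact (g.continuous.comp (continuous_const.add
          (continuous_const.mul continuous_id))).aestronglyMeasurable
      · intro x; filter_upwards with z; exact g.norm_coe_le_norm _
      · exact integrable_const _
      · filter_upwards with z
        exact g.continuous.comp (continuous_id.add continuous_const)
    · exact integrable_const _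
    · intro n
      filter_upwards with x
      have := norm_integral_le_of_norm_le_const (μ := gaussianReal 0 1)
        (f := fun z => g (x + Real.sqrt (w n) * z)) (C := ‖g‖)
        (Filter.Eventually.of_forall fun z => g.norm_coe_le_norm _)
      simpa [measure_univ] using this
    · filter_upwards with x
      have hax : ∀ᵐ z ∂(gaussianReal 0 1), Filter.Tendsto
          (fun n : ℕ => g (x + Real.sqrt (w n) * z)) Filter.atTop (nhds (g x)) := by
        filter_upwards with z
        have harg : Filter.Tendsto (fun n : ℕ => x + Real.sqrt (w n) * z)
            Filter.atTop (nhds x) := by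
          have := (hc0.mul_const z).const_add x
          simpa using this
        exact ((g.continuous.tendsto x).comp harg)
      have := tendsto_integral_of_dominated_convergence (μ := gaussianReal 0 1)
        (F := fun (n : ℕ) (z : ℝ) => g (x + Real.sqrt (w n) * z)) (f := fun _ => g x)
        (bound := fun _ => ‖g‖)
        (fun n => (g.continuous.comp (continuous_const.add
          (continuous_const.mul continuous_id))).aestronglyMeasurable)
        (integrable_const _)
        (fun n => Filter.Eventually.of_forall fun z => g.norm_coe_le_norm _)
        hax
      simpa [measure_univ] using this
  have l1 := hlim μ inferInstance
  have l2 := hlim ν inferInstance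
  rw [funext key] at l1
  exact tendsto_nhds_unique l1 l2

lemma mw_sin_zero (m : Measure ℝ) [IsProbabilityMeasure m]
    (hm : Measure.map (fun x : ℝ => -x) m = m) (t : ℝ) :
    ∫ x, Real.sin (t * x) ∂m = 0 := by
  have h1 : ∫ x, Real.sin (t * x) ∂m = ∫ x, Real.sin (t * (-x)) ∂m := by
    conv_lhs => rw [← hm]
    exact integral_map measurable_neg.aemeasurable
      (Real.continuous_sin.comp (continuous_const.mul continuous_id)).aestronglyMeasurable
  have h2 : ∀ x : ℝ, Real.sin (t * (-x)) = -Real.sin (t * x) := by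
    intro x
    rw [show t * (-x) = -(t*x) by ring, Real.sin_neg]
  rw [integral_congr_ae (Filter.Eventually.of_forall h2), integral_neg] at h1
  linarith

set_option maxHeartbeats 1000000 in
lemma mw_core {Ω : Type*} [MeasurableSpace Ω] (P : Measure Ω) [IsProbabilityMeasure P]
    (Y Z : Ω → ℝ) (hY : Measurable Y) (hZ : Measurable Z)
    (hind : IndepFun Y Z P) (hZY : P.map Z = P.map Y)
    (hneg : P.map (fun ω => -(Y ω)) = P.map Y)
    (hcomb : ∀ s t : ℝ, s^2 + t^2 = 1 →
      P.map (fun ω => s * Y ω + t * Z ω) = P.map Y) :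
    ∃ v : NNReal, P.map Y = gaussianReal 0 v := by
  set μ := P.map Y with hμ
  haveI : IsProbabilityMeasure μ := Measure.isProbabilityMeasure_map hY.aemeasurable
  have hμneg : Measure.map (fun x : ℝ => -x) μ = μ := by
    rw [hμ, Measure.map_map measurable_neg hY]
    exact hneg
  have hsin : ∀ t : ℝ, ∫ x, Real.sin (t * x) ∂μ = 0 := mw_sin_zero μ hμneg
  set φ : ℝ → ℝ := fun t => ∫ x, Real.cos (t * x) ∂μ with hφdef
  have hφ0 : φ 0 = 1 := by
    simp only [hφdef, zero_mul, Real.cos_zero]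
    simp [measure_univ]
  have hφbd : ∀ t, |φ t| ≤ 1 := by
    intro t
    have h := norm_integral_le_of_norm_le_const (μ := μ) (f := fun x => Real.cos (t * x))
      (C := 1) (Filter.Eventually.of_forall fun x => by
        simpa [Real.norm_eq_abs] using Real.abs_cos_le_one (t * x))
    simpa [measure_univ, Real.norm_eq_abs] using h
  have hφcont : Continuous φ := by
    refine continuous_of_dominated (F := fun (t : ℝ) (x : ℝ) => Real.cos (t * x))
      (bound := fun _ => 1) ?_ ?_ ?_ ?_
    · intro t
      exact (Real.continuous_cos.comp (continuous_const.mul continuous_id)).aestronglyMeasurable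
    · intro t
      filter_upwards with x
      simpa [Real.norm_eq_abs] using Real.abs_cos_le_one (t * x)
    · exact integrable_const _
    · filter_upwards with x
      exact Real.continuous_cos.comp (continuous_id.mul continuous_const)
  -- functional equation
  have hjoint : P.map (fun ω => (Y ω, Z ω)) = μ.prod μ := by
    have h := (indepFun_iff_map_prod_eq_prod_map_map hY.aemeasurable hZ.aemeasurable).mp hind
    rw [hZY] at h
    exact h
  have hφmul : ∀ a b : ℝ, φ a * φ b = φ (Real.sqrt (a^2+b^2)) := by
    intro a b
    by_cases hab : a = 0 ∧ b = 0
    · rw [hab.1, hab.2, hφ0]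
      norm_num [hφ0]
    · have hr2 : 0 < a^2 + b^2 := by
        rcases not_and_or.mp hab with h | h
        · have : 0 < a^2 := by positivity
          nlinarith [sq_nonneg b]
        · have : 0 < b^2 := by positivity
          nlinarith [sq_nonneg a]
      set r := Real.sqrt (a^2+b^2) with hrdef
      have hr : 0 < r := Real.sqrt_pos.2 hr2
      have hrsq : r^2 = a^2 + b^2 := Real.sq_sqrt hr2.le
      set s := a / r with hs
      set t := b / r with ht
      have hst : s^2 + t^2 = 1 := by
        rw [hs, ht, div_pow, div_pow, ← add_div, ← hrsq]
        exact div_self (by positivity)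
      have hmapc := hcomb s t hst
      have hYZmeas : Measurable (fun ω => s * Y ω + t * Z ω) :=
        ((hY.const_mul s).add (hZ.const_mul t))
      have hra : r * s = a := by rw [hs]; field_simp
      have hrb : r * t = b := by rw [ht]; field_simp
      have e1 : φ r = ∫ ω, Real.cos (a * Y ω + b * Z ω) ∂P := by
        simp only [hφdef]
        rw [← hmapc, integral_map (f := fun x : ℝ => Real.cos (r * x)) hYZmeas.aemeasurable
          ((by fun_prop : Continuous fun x : ℝ => Real.cos (r * x)).aestronglyMeasurable)]
        refine integral_congr_ae (Filter.Eventually.of_forall fun ω => ?_)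
        show Real.cos (r * (s * Y ω + t * Z ω)) = Real.cos (a * Y ω + b * Z ω)
        have harg : r * (s * Y ω + t * Z ω) = a * Y ω + b * Z ω := by
          calc r * (s * Y ω + t * Z ω) = (r*s) * Y ω + (r*t) * Z ω := by ring
            _ = a * Y ω + b * Z ω := by rw [hra, hrb]
        rw [harg]
      have hpairmeas : Measurable (fun ω => (Y ω, Z ω)) := hY.prodMk hZ
      have e2 : (∫ ω, Real.cos (a * Y ω + b * Z ω) ∂P)
          = ∫ p : ℝ × ℝ, Real.cos (a * p.1 + b * p.2) ∂(μ.prod μ) := by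
        rw [← hjoint, integral_map (f := fun p : ℝ × ℝ => Real.cos (a * p.1 + b * p.2))
          hpairmeas.aemeasurable
          ((by fun_prop : Continuous fun p : ℝ × ℝ =>
            Real.cos (a * p.1 + b * p.2)).aestronglyMeasurable)]
      have e3 : (∫ p : ℝ × ℝ, Real.cos (a * p.1 + b * p.2) ∂(μ.prod μ))
          = φ a * φ b := by
        have hpt : ∀ p : ℝ × ℝ, Real.cos (a * p.1 + b * p.2)
            = Real.cos (a * p.1) * Real.cos (b * p.2)
              - Real.sin (a * p.1) * Real.sin (b * p.2) := by
          intro p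
          rw [Real.cos_add]
        rw [integral_congr_ae (Filter.Eventually.of_forall hpt)]
        have i1 : Integrable (fun p : ℝ × ℝ => Real.cos (a * p.1) * Real.cos (b * p.2))
            (μ.prod μ) := by
          refine mw_int_bdd _ ?_ (C := 1) ?_
          · exact ((Real.continuous_cos.comp (continuous_const.mul continuous_fst)).mul
              (Real.continuous_cos.comp (continuous_const.mul continuous_snd))).aestronglyMeasurable
          · intro p
            rw [abs_mul]
            exact mul_le_one₀ (Real.abs_cos_le_one _) (abs_nonneg _) (Real.abs_cos_le_one _)
        have i2 : Integrable (fun p : ℝ × ℝ => Real.sin (a * p.1) * Real.sin (b * p.2))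
            (μ.prod μ) := by
          refine mw_int_bdd _ ?_ (C := 1) ?_
          · exact ((Real.continuous_sin.comp (continuous_const.mul continuous_fst)).mul
              (Real.continuous_sin.comp (continuous_const.mul continuous_snd))).aestronglyMeasurable
          · intro p
            rw [abs_mul]
            exact mul_le_one₀ (Real.abs_sin_le_one _) (abs_nonneg _) (Real.abs_sin_le_one _)
        rw [integral_sub i1 i2]
        rw [integral_prod_mul (f := fun x => Real.cos (a * x)) (g := fun y => Real.cos (b * y)),
          integral_prod_mul (f := fun x => Real.sin (a * x)) (g := fun y => Real.sin (b * y))]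
        rw [hsin a, zero_mul, sub_zero]
      rw [e1, e2, e3]
  obtain ⟨c, hc0, hφeq⟩ := mw_cauchy φ hφcont hφ0 hφbd hφmul
  set v : NNReal := Real.toNNReal (2*c) with hvdef
  have hvr : ((v : NNReal) : ℝ) = 2*c := Real.coe_toNNReal _ (by linarith)
  refine ⟨v, ?_⟩
  have hgsin : ∀ t : ℝ, ∫ x, Real.sin (t * x) ∂(gaussianReal 0 v) = 0 :=
    mw_sin_zero _ (mw_gauss_symm v)
  have hgcos : ∀ t : ℝ, (∫ x, Real.cos (t * x) ∂μ) = ∫ x, Real.cos (t * x) ∂(gaussianReal 0 v) := by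
    intro t
    rw [mw_gauss_char v t]
    have : (∫ x, Real.cos (t * x) ∂μ) = φ t := rfl
    rw [this, hφeq t, hvr]
    congr 1
    ring
  exact mw_ext μ (gaussianReal 0 v) hsin hgsin hgcos

/-- Maxwell's Theorem: if `X_1, …, X_d` (`d ≥ 2`) are independent real random variables such
that the vector `(X_1, …, X_d)` is spherically symmetric (its law is invariant under every
orthogonal transformation of `ℝ^d`) and not identically zero, then the `X_i` are iid
centered normal with a common (positive) variance. -/
theorem maxwell_theorem {Ω : Type*} [MeasurableSpace Ω]
    (P : Measure Ω) [IsProbabilityMeasure P] {d : ℕ} (hd : 2 ≤ d)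
    (X : Fin d → Ω → ℝ) (hX : ∀ i, Measurable (X i))
    (hindep : iIndepFun X P)
    (hsph : ∀ O : Matrix (Fin d) (Fin d) ℝ, Oᵀ * O = 1 →
      P.map (fun ω => O.mulVec (fun i => X i ω)) = P.map (fun ω (i : Fin d) => X i ω))
    (hnz : ¬ (∀ᵐ ω ∂P, ∀ i, X i ω = 0)) :
    ∃ v : NNReal, 0 < v ∧ ∀ i, P.map (X i) = gaussianReal 0 v := by
  have h0d : 0 < d := by omega
  have h1d : 1 < d := by omega
  set i0 : Fin d := ⟨0, h0d⟩ with hi0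
  set i1 : Fin d := ⟨1, h1d⟩ with hi1
  have h01 : i0 ≠ i1 := by
    rw [hi0, hi1]
    intro h
    simpa using congrArg Fin.val h
  have hXmeas : Measurable (fun ω (i : Fin d) => X i ω) :=
    measurable_pi_lambda _ (fun i => hX i)
  have law_comb : ∀ (a b : Fin d), a ≠ b → ∀ s t : ℝ, s^2+t^2 = 1 →
      P.map (fun ω => s * X a ω + t * X b ω) = P.map (X a) := by
    intro a b hab s t hst
    have hmain := hsph (mwRot a b s t) (mwRot_orth a b hab s t hst)
    have hmulmeas : Measurable (fun ω => (mwRot a b s t).mulVec (fun i => X i ω)) := by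
      apply measurable_pi_lambda
      intro i
      simp only [Matrix.mulVec, dotProduct]
      exact Finset.measurable_sum _ (fun j _ => (hX j).const_mul _)
    have h2 := congrArg (Measure.map (fun v : Fin d → ℝ => v a)) hmain
    rw [Measure.map_map (measurable_pi_apply a) hmulmeas,
      Measure.map_map (measurable_pi_apply a) hXmeas] at h2
    have e1 : ((fun v : Fin d → ℝ => v a) ∘ (fun ω => (mwRot a b s t).mulVec (fun i => X i ω)))
        = fun ω => s * X a ω + t * X b ω := by
      funext ω
      exact mwRot_mulVec a b hab s t _
    have e2 : ((fun v : Fin d → ℝ => v a) ∘ (fun ω (i : Fin d) => X i ω)) = X a := rfl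
    rw [e1, e2] at h2
    exact h2
  have hmarg : ∀ i : Fin d, P.map (X i) = P.map (X i0) := by
    intro i
    rcases eq_or_ne i i0 with rfl | hi
    · rfl
    · have h := law_comb i0 i (Ne.symm hi) 0 1 (by norm_num)
      rw [show (fun ω => (0:ℝ) * X i0 ω + 1 * X i ω) = X i from funext fun ω => by ring] at h
      exact h
  have hneg : P.map (fun ω => -(X i0 ω)) = P.map (X i0) := by
    have h := law_comb i0 i1 h01 (-1) 0 (by norm_num)
    rw [show (fun ω => (-1:ℝ) * X i0 ω + 0 * X i1 ω) = fun ω => -(X i0 ω)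
      from funext fun ω => by ring] at h
    exact h
  have hcomb : ∀ s t : ℝ, s^2+t^2 = 1 →
      P.map (fun ω => s * X i0 ω + t * X i1 ω) = P.map (X i0) :=
    fun s t h => law_comb i0 i1 h01 s t h
  have hind : IndepFun (X i0) (X i1) P := hindep.indepFun h01
  obtain ⟨v, hv⟩ := mw_core P (X i0) (X i1) (hX i0) (hX i1) hind (hmarg i1) hneg hcomb
  rcases eq_or_ne v 0 with rfl | hv0
  · exfalso
    apply hnz
    rw [gaussianReal_zero_var] at hv
    have hzero : ∀ i : Fin d, ∀ᵐ ω ∂P, X i ω = 0 := by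
      intro i
      have hmapi : P.map (X i) = Measure.dirac 0 := by rw [hmarg i, hv]
      have hP0 : P (X i ⁻¹' {0}ᶜ) = 0 := by
        have hc := congrArg (fun m : Measure ℝ => m ({0}ᶜ)) hmapi
        rwa [Measure.map_apply (hX i) (measurableSet_singleton 0).compl,
          Measure.dirac_apply' _ (measurableSet_singleton 0).compl,
          Set.indicator_of_notMem (by simp)] at hc
      rw [ae_iff]
      convert hP0 using 2
      rfl
    exact ae_all_iff.mpr hzero
  · refine ⟨v, pos_iff_ne_zero.mpr hv0, fun i => ?_⟩
    rw [hmarg i, hv]
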